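/- With R > 1, γ ∈ (0,1], and ψ ≥ (R-1)/γ - (δ_s-δ_M)/δ_M, the closed-loop SIT system with feedback u = ψ(1-ν)ν_E E + (δ_s-δ_M)(M+M_s) has the origin as its only equilibrium in [0,∞)⁵. Concretely: if (E,F,M,F_s,M_s) ∈ [0,∞)⁵ makes all five right-hand sides vanish (with the convention M/(M+γM_s)=0 at M=M_s=0), then E=F=M=F_s=M_s=0. -/

import Mathlib

set_option maxHeartbeats 1000000


theorem origin_unique_equilibrium (β_E ν_E δ_E δ_F δ_M δ_s K ν γ ψ : ℝ)
    (hβ : 0 < β_E) (hνE : 0 < ν_E) (hδE : 0 < δ_E) (hδF : 0 < δ_F) (hδM : 0 < δ_M)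
    (hδ : δ_M < δ_s) (hK : 0 < K) (hν : ν ∈ Set.Ioo (0:ℝ) 1) (hγ : γ ∈ Set.Ioc (0:ℝ) 1)
    (R : ℝ) (hR : R = β_E * ν * ν_E / (δ_F * (δ_E + ν_E))) (hR1 : 1 < R)
    (hψ : (R - 1) / γ - (δ_s - δ_M) / δ_M ≤ ψ)
    (E F M F_s M_s : ℝ)
    (hEpos : 0 ≤ E) (hFpos : 0 ≤ F) (hMpos : 0 ≤ M) (hFspos : 0 ≤ F_s) (hMspos : 0 ≤ M_s)
    (heqE : β_E * F * (1 - E / K) - (ν_E + δ_E) * E = 0)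
    (heqF : ν * ν_E * E * (M / (M + γ * M_s)) - δ_F * F = 0)
    (heqM : (1 - ν) * ν_E * E - δ_M * M = 0)
    (heqFs : ν * ν_E * E * (γ * M_s / (M + γ * M_s)) - δ_F * F_s = 0)
    (heqMs : ψ * (1 - ν) * ν_E * E + (δ_s - δ_M) * (M + M_s) - δ_s * M_s = 0) :
    E = 0 ∧ F = 0 ∧ M = 0 ∧ F_s = 0 ∧ M_s = 0 := by
  obtain ⟨hν0, hν1⟩ := hν
  obtain ⟨hγ0, hγ1⟩ := hγ
  rcases eq_or_lt_of_le hEpos with hE | hE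
  · -- case E = 0
    have hE0 : E = 0 := hE.symm
    subst hE0
    have hM0 : M = 0 := by
      have h : (1 - ν) * ν_E * (0:ℝ) = 0 := by ring
      have h2 : δ_M * M = 0 := by linarith
      exact (mul_eq_zero.mp h2).resolve_left hδM.ne'
    subst hM0
    have hMs0 : M_s = 0 := by
      have h : ψ * (1 - ν) * ν_E * (0:ℝ) = 0 := by ring
      have h2 : δ_M * M_s = 0 := by linarith
      exact (mul_eq_zero.mp h2).resolve_left hδM.ne'
    subst hMs0
    have hF0 : F = 0 := by
      have h : ν * ν_E * 0 * ((0:ℝ) / (0 + γ * 0)) = 0 := by ring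
      have h2 : δ_F * F = 0 := by linarith
      exact (mul_eq_zero.mp h2).resolve_left hδF.ne'
    have hFs0 : F_s = 0 := by
      have h : ν * ν_E * 0 * (γ * (0:ℝ) / (0 + γ * 0)) = 0 := by ring
      have h2 : δ_F * F_s = 0 := by linarith
      exact (mul_eq_zero.mp h2).resolve_left hδF.ne'
    exact ⟨rfl, hF0, rfl, hFs0, rfl⟩
  · -- case E > 0 : contradiction
    exfalso
    have hM : 0 < M := by
      have h2 : 0 < δ_M * M := by
        linarith [heqM, mul_pos (mul_pos (by linarith : (0:ℝ) < 1 - ν) hνE) hE]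
      rcases mul_pos_iff.mp h2 with h | h
      · exact h.2
      · exact absurd h.1 (not_lt.mpr hδM.le)
    have hMM : (1 - ν) * ν_E * E = δ_M * M := by linarith
    have hD : 0 < M + γ * M_s := by linarith [mul_nonneg hγ0.le hMspos]
    have hFD : δ_F * F * (M + γ * M_s) = ν * ν_E * E * M := by
      have h := heqF
      field_simp at h
      linarith [h]
    have hβν : β_E * ν * ν_E = R * (δ_F * (δ_E + ν_E)) := by
      rw [hR]; field_simp
    have hc : δ_F * (δ_E + ν_E) * E ≠ 0 := by positivity
    have hkey' : δ_F * (δ_E + ν_E) * E * (R * (1 - E / K) * M)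
        = δ_F * (δ_E + ν_E) * E * (M + γ * M_s) := by
      linear_combination (δ_F * (M + γ * M_s)) * heqE - (β_E * (1 - E / K)) * hFD
        - ((1 - E / K) * E * M) * hβν
    have hkey : R * (1 - E / K) * M = M + γ * M_s := mul_left_cancel₀ hc hkey'
    have h1 : δ_M * M_s = ψ * δ_M * M + (δ_s - δ_M) * M := by
      linear_combination ψ * hMM - heqMs
    have e1 : γ * δ_M * M * ((R - 1) / γ - (δ_s - δ_M) / δ_M)
        = (R - 1) * δ_M * M - γ * (δ_s - δ_M) * M := by
      field_simp
    have hprod := mul_le_mul_of_nonneg_left hψ (show (0:ℝ) ≤ γ * δ_M * M by positivity)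
    rw [e1] at hprod
    have h2 : (R - 1) * M ≤ γ * M_s := by nlinarith [h1, hprod, hδM]
    have hx : 0 < E / K := div_pos hE hK
    nlinarith [hkey, h2, mul_pos (mul_pos (by linarith : (0:ℝ) < R) hx) hM]
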